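/- Let a₁, a₂, b₁, b₂ > 0 be real numbers. Then (1/2)·(a₁/(a₁ + b₂) + a₂/(a₂ + b₁)) = (1/2)·(b₁/(b₁ + a₂) + b₂/(b₂ + a₁)) if and only if a₁·a₂ = b₁·b₂. (This is the neutrality condition ρ_A = ρ_B for the Moran process with population size N = 2 and two environments, where the mutant's fixation probability is ρ_A = (1/2)(a₁/(a₁+b₂) + a₂/(a₂+b₁)) and the resident's is ρ_B = (1/2)(b₁/(b₁+a₂) + b₂/(b₂+a₁)).) -/

import Mathlib

/-- Neutrality condition for the Moran process with `N = 2` and two environments: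
`ρ_A = ρ_B` iff `a₁ a₂ = b₁ b₂`. -/
theorem stmt_6 (a₁ a₂ b₁ b₂ : ℝ) (ha₁ : 0 < a₁) (ha₂ : 0 < a₂)
    (hb₁ : 0 < b₁) (hb₂ : 0 < b₂) :
    (1 / 2) * (a₁ / (a₁ + b₂) + a₂ / (a₂ + b₁)) =
      (1 / 2) * (b₁ / (b₁ + a₂) + b₂ / (b₂ + a₁)) ↔ a₁ * a₂ = b₁ * b₂ := by
  have h1 : a₁ + b₂ ≠ 0 := by positivity
  have h2 : a₂ + b₁ ≠ 0 := by positivity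
  have h3 : b₁ + a₂ ≠ 0 := by positivity
  have h4 : b₂ + a₁ ≠ 0 := by positivity
  constructor
  · intro h
    field_simp at h
    have h0 : (a₁ * a₂ - b₁ * b₂) * (4 * (a₁ * a₂ + b₁ * b₂ + a₁ * b₁ + a₂ * b₂)) = 0 := by
      linear_combination 2 * h
    rcases mul_eq_zero.mp h0 with h0 | h0
    · linarith [sub_eq_zero.mp h0]
    · exfalso
      have : 0 < 4 * (a₁ * a₂ + b₁ * b₂ + a₁ * b₁ + a₂ * b₂) := by positivity
      linarith
  · intro h
    field_simp
    linear_combination (2 * (a₁ * a₂ + b₁ * b₂ + a₁ * b₁ + a₂ * b₂)) * h
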